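/- Let N be a positive integer and let k be a real number that is not an integer. Then N − (1/(2π²))(1 − cos(2πk)) · Σ_{l,m=0}^{N−1} 1/(k+l−m)² equals min(N, |k| − sin(2π|k|)/(2π)) + (sin²(π|k|)/π²)·(ψ₀(N+|k|) + (N+|k|)ψ₁(N+|k|) + ψ₀(|N−|k||+1) + |N−|k||·ψ₁(|N−|k||+1) − 2|k|ψ₁(|k|+1) − 2ψ₀(|k|+1)). -/

import Mathlib

open Real Filter Finset
open Topology

/-- The `k`-th polygamma function: the `(k+1)`-st derivative of `log ∘ Γ`.
(Since `Real.log` of a negative number is the log of its absolute value, this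
agrees with the analytic continuation of the polygamma functions.) -/
noncomputable def polygamma (k : ℕ) (x : ℝ) : ℝ :=
  iteratedDeriv (k + 1) (fun y => Real.log (Real.Gamma y)) x

/-- The digamma function `ψ₀`. -/
noncomputable def digamma (x : ℝ) : ℝ := polygamma 0 x

/-- The trigamma function `ψ₁`. -/
noncomputable def trigamma (x : ℝ) : ℝ := polygamma 1 x

noncomputable def lG : ℝ → ℝ := fun y => Real.log (Real.Gamma y)

def NI : Set ℝ := {x : ℝ | ∀ n : ℤ, x ≠ (n : ℝ)}

lemma isOpen_NI : IsOpen NI := by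
  have : NI = (Set.range ((↑) : ℤ → ℝ))ᶜ := by
    ext x; simp [NI, Set.mem_range, eq_comm]
  rw [this]
  exact Int.isClosedEmbedding_coe_real.isClosed_range.isOpen_compl

lemma NI_mem_nhds {x : ℝ} (hx : x ∈ NI) : NI ∈ 𝓝 x := isOpen_NI.mem_nhds hx

lemma NI.not_pole {x : ℝ} (hx : x ∈ NI) : ∀ m : ℕ, x ≠ -m := by
  intro m h; exact hx (-m) (by push_cast [h]; ring)

lemma NI.ne_zero {x : ℝ} (hx : x ∈ NI) : x ≠ 0 := by
  simpa using hx 0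

lemma NI.gamma_ne_zero {x : ℝ} (hx : x ∈ NI) : Real.Gamma x ≠ 0 :=
  Real.Gamma_ne_zero (NI.not_pole hx)

lemma NI.add_int {x : ℝ} (hx : x ∈ NI) (m : ℤ) : x + m ∈ NI := by
  intro n h
  exact hx (n - m) (by push_cast; linarith)

lemma NI.neg {x : ℝ} (hx : x ∈ NI) : -x ∈ NI := by
  intro n h; exact hx (-n) (by push_cast; linarith)

lemma NI.one_sub {x : ℝ} (hx : x ∈ NI) : 1 - x ∈ NI := by
  have := NI.add_int (NI.neg hx) 1
  intro n h
  exact this n (by push_cast at h ⊢; linarith)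

lemma gamma_analyticOnNhd : AnalyticOnNhd ℝ Real.Gamma NI := by
  intro x hx
  have hopen : IsOpen ((Set.range ((↑) : ℤ → ℂ))ᶜ) := by
    have : Set.range ((↑) : ℤ → ℂ) = (↑) '' (Set.range ((↑) : ℤ → ℝ)) := by
      ext z; constructor
      · rintro ⟨n, rfl⟩; exact ⟨n, ⟨n, rfl⟩, by push_cast; rfl⟩
      · rintro ⟨y, ⟨n, rfl⟩, rfl⟩; exact ⟨n, by push_cast; rfl⟩
    rw [this]
    exact (Complex.isometry_ofReal.isClosedEmbedding.isClosedMap _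
      Int.isClosedEmbedding_coe_real.isClosed_range).isOpen_compl
  have hdiff : DifferentiableOn ℂ Complex.Gamma ((Set.range ((↑) : ℤ → ℂ))ᶜ) := by
    intro s hs
    refine (Complex.differentiableAt_Gamma s ?_).differentiableWithinAt
    intro m h
    exact hs ⟨-m, by push_cast [h]; ring⟩
  have hmem : ((Set.range ((↑) : ℤ → ℂ))ᶜ : Set ℂ) ∈ 𝓝 (x : ℂ) := by
    refine hopen.mem_nhds ?_
    rintro ⟨n, hn⟩
    exact hx n (by exact_mod_cast hn.symm)
  have hC : AnalyticAt ℂ Complex.Gamma (x : ℂ) := hdiff.analyticAt hmem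
  have h1 : AnalyticAt ℝ (fun y : ℝ => (Complex.Gamma (y : ℂ)).re) x := by
    exact (Complex.reCLM.analyticAt _).comp
      ((hC.restrictScalars).comp (Complex.ofRealCLM.analyticAt x))
  refine h1.congr ?_
  filter_upwards with y
  rw [Complex.Gamma_ofReal]; simp

lemma digamma_def (x : ℝ) : digamma x = deriv lG x := by
  rw [digamma, polygamma, iteratedDeriv_one]; rfl

lemma trigamma_def (x : ℝ) : trigamma x = deriv (deriv lG) x := by
  rw [trigamma, polygamma, iteratedDeriv_succ, iteratedDeriv_one]
  rfl

lemma lG_diff {x : ℝ} (hx : x ∈ NI) : DifferentiableAt ℝ lG x :=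
  (Real.differentiableAt_Gamma (NI.not_pole hx)).log (NI.gamma_ne_zero hx)

lemma deriv_lG_eventually {x : ℝ} (hx : x ∈ NI) :
    deriv lG =ᶠ[𝓝 x] fun y => deriv Real.Gamma y / Real.Gamma y := by
  filter_upwards [NI_mem_nhds hx] with y hy
  exact deriv.log (Real.differentiableAt_Gamma (NI.not_pole hy)) (NI.gamma_ne_zero hy)

lemma deriv_lG_diff {x : ℝ} (hx : x ∈ NI) : DifferentiableAt ℝ (deriv lG) x := by
  have h1 : DifferentiableAt ℝ (fun y => deriv Real.Gamma y / Real.Gamma y) x := by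
    refine DifferentiableAt.div ?_ ?_ (NI.gamma_ne_zero hx)
    · exact ((gamma_analyticOnNhd.deriv) x hx).differentiableAt
    · exact (gamma_analyticOnNhd x hx).differentiableAt
  exact h1.congr_of_eventuallyEq (deriv_lG_eventually hx)

/-- Difference equation for digamma. -/
lemma digamma_add_one {x : ℝ} (hx : x ∈ NI) : digamma (x + 1) = digamma x + 1 / x := by
  have hev : (fun y => lG (y + 1)) =ᶠ[𝓝 x] fun y => Real.log y + lG y := by
    filter_upwards [NI_mem_nhds hx] with y hy
    rw [lG, lG, Real.Gamma_add_one (NI.ne_zero hy), Real.log_mul (NI.ne_zero hy) (NI.gamma_ne_zero hy)]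
  have h1 : deriv (fun y => lG (y + 1)) x = deriv lG (x + 1) := deriv_comp_add_const lG 1 x
  have h2 : deriv (fun y => Real.log y + lG y) x = x⁻¹ + deriv lG x := by
    rw [deriv_fun_add (Real.differentiableAt_log (NI.ne_zero hx)) (lG_diff hx), Real.deriv_log]
  rw [digamma_def, digamma_def, ← h1, hev.deriv_eq, h2, one_div]; ring

/-- Difference equation for trigamma. -/
lemma trigamma_add_one {x : ℝ} (hx : x ∈ NI) : trigamma (x + 1) = trigamma x - 1 / x ^ 2 := by
  have hev : (fun y => deriv lG (y + 1)) =ᶠ[𝓝 x] fun y => y⁻¹ + deriv lG y := by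
    filter_upwards [NI_mem_nhds hx] with y hy
    have := digamma_add_one hy
    rw [digamma_def, digamma_def] at this
    rw [this, one_div, add_comm]
  have h1 : deriv (fun y => deriv lG (y + 1)) x = deriv (deriv lG) (x + 1) :=
    deriv_comp_add_const (deriv lG) 1 x
  have h2 : deriv (fun y => y⁻¹ + deriv lG y) x = -(x ^ 2)⁻¹ + deriv (deriv lG) x := by
    rw [deriv_fun_add (differentiableAt_inv (NI.ne_zero hx)) (deriv_lG_diff hx), deriv_inv]
  rw [trigamma_def, trigamma_def, ← h1, hev.deriv_eq, h2, one_div]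
  ring

lemma NI.sin_ne_zero {x : ℝ} (hx : x ∈ NI) : Real.sin (π * x) ≠ 0 := by
  intro h
  rcases Real.sin_eq_zero_iff.mp h with ⟨n, hn⟩
  exact hx n (mul_left_cancel₀ Real.pi_ne_zero (by linarith) : (n:ℝ) = x).symm

/-- Reflection formula for digamma. -/
lemma digamma_reflect {x : ℝ} (hx : x ∈ NI) :
    digamma x - digamma (1 - x) = -(π * (Real.cos (π * x) / Real.sin (π * x))) := by
  have hF : HasDerivAt (fun y => lG y + lG (1 - y))
      (deriv lG x + deriv lG (1 - x) * (-1)) x := by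
    refine ((lG_diff hx).hasDerivAt).add ?_
    exact ((lG_diff (NI.one_sub hx)).hasDerivAt).comp x ((hasDerivAt_id x).const_sub 1)
  have hsin : HasDerivAt (fun y => Real.sin (π * y)) (Real.cos (π * x) * π) x :=
    (Real.hasDerivAt_sin (π * x)).comp x (by simpa using (hasDerivAt_id x).const_mul π)
  have hG : HasDerivAt (fun y => Real.log π - Real.log (Real.sin (π * y)))
      (-(Real.cos (π * x) * π / Real.sin (π * x))) x :=
    (hsin.log (NI.sin_ne_zero hx)).const_sub (Real.log π)
  have hFG : (fun y => lG y + lG (1 - y)) =ᶠ[𝓝 x]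
      fun y => Real.log π - Real.log (Real.sin (π * y)) := by
    filter_upwards [NI_mem_nhds hx] with y hy
    have h1 := Real.Gamma_mul_Gamma_one_sub y
    have : lG y + lG (1 - y) = Real.log (Real.Gamma y * Real.Gamma (1 - y)) := by
      rw [Real.log_mul (NI.gamma_ne_zero hy) (NI.gamma_ne_zero (NI.one_sub hy))]; rfl
    rw [this, h1, Real.log_div Real.pi_ne_zero (NI.sin_ne_zero hy)]
  have := hFG.deriv_eq
  rw [hF.deriv, hG.deriv] at this
  rw [digamma_def, digamma_def]
  rw [show deriv lG x + deriv lG (1 - x) * (-1) = deriv lG x - deriv lG (1 - x) by ring] at this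
  rw [this]; ring

/-- Reflection formula for trigamma. -/
lemma trigamma_reflect {x : ℝ} (hx : x ∈ NI) :
    trigamma x + trigamma (1 - x) = π ^ 2 / Real.sin (π * x) ^ 2 := by
  have hF : HasDerivAt (fun y => deriv lG y - deriv lG (1 - y))
      (deriv (deriv lG) x - deriv (deriv lG) (1 - x) * (-1)) x := by
    refine ((deriv_lG_diff hx).hasDerivAt).sub ?_
    exact ((deriv_lG_diff (NI.one_sub hx)).hasDerivAt).comp x ((hasDerivAt_id x).const_sub 1)
  have hcos : HasDerivAt (fun y => Real.cos (π * y)) (-Real.sin (π * x) * π) x :=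
    (Real.hasDerivAt_cos (π * x)).comp x (by simpa using (hasDerivAt_id x).const_mul π)
  have hsin : HasDerivAt (fun y => Real.sin (π * y)) (Real.cos (π * x) * π) x :=
    (Real.hasDerivAt_sin (π * x)).comp x (by simpa using (hasDerivAt_id x).const_mul π)
  have hG : HasDerivAt (fun y => -(π * (Real.cos (π * y) / Real.sin (π * y))))
      (-(π * ((-Real.sin (π * x) * π * Real.sin (π * x) -
        Real.cos (π * x) * (Real.cos (π * x) * π)) / Real.sin (π * x) ^ 2))) x :=
    ((hcos.div hsin (NI.sin_ne_zero hx)).const_mul π).neg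
  have hFG : (fun y => deriv lG y - deriv lG (1 - y)) =ᶠ[𝓝 x]
      fun y => -(π * (Real.cos (π * y) / Real.sin (π * y))) := by
    filter_upwards [NI_mem_nhds hx] with y hy
    have := digamma_reflect hy
    rw [digamma_def, digamma_def] at this
    exact this
  have hde := hFG.deriv_eq
  rw [hF.deriv, hG.deriv] at hde
  rw [trigamma_def, trigamma_def]
  have hs := NI.sin_ne_zero hx
  have hpyth : Real.sin (π * x) ^ 2 + Real.cos (π * x) ^ 2 = 1 := Real.sin_sq_add_cos_sq _
  field_simp at hde ⊢
  have e : -(π ^ 2 * (-Real.sin (x * π) ^ 2 - Real.cos (x * π) ^ 2) / Real.sin (x * π) ^ 2)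
      = π ^ 2 / Real.sin (x * π) ^ 2 := by
    rw [show -Real.sin (x * π) ^ 2 - Real.cos (x * π) ^ 2 = -1 by
      linarith [Real.sin_sq_add_cos_sq (x * π)]]
    ring
  linarith [hde, e]

lemma NI.add_natc {x : ℝ} (hx : x ∈ NI) (m : ℕ) : x + (m : ℝ) ∈ NI := by
  have := NI.add_int hx m; push_cast at this; exact this

lemma NI.sub_natc {x : ℝ} (hx : x ∈ NI) (m : ℕ) : x - (m : ℝ) ∈ NI := by
  have := NI.add_int hx (-m); push_cast at this
  simpa [sub_eq_add_neg] using this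

lemma trigamma_telescope (a : ℝ) (ha : a ∈ NI) (M : ℕ) :
    trigamma a - trigamma (a + M) = ∑ j ∈ Finset.range M, 1 / (a + j) ^ 2 := by
  induction M with
  | zero => simp
  | succ M ih =>
      rw [Finset.sum_range_succ, ← ih]
      have h1 : a + ((M : ℕ) + 1 : ℕ) = (a + M) + 1 := by push_cast; ring
      rw [h1, trigamma_add_one (NI.add_natc ha M)]
      ring

lemma master (a : ℝ) (ha : a ∈ NI) (N : ℕ) :
    digamma (a + N) + (a + N) * trigamma (a + N) + digamma (a - N + 1)
      + (a - N) * trigamma (a - N + 1) - 2 * a * trigamma (a + 1) - 2 * digamma (a + 1)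
      + ∑ l ∈ Finset.range N, ∑ m ∈ Finset.range N, 1 / (a + l - m) ^ 2 = 0 := by
  induction N with
  | zero =>
      simp only [Nat.cast_zero, add_zero, sub_zero, Finset.range_zero, Finset.sum_empty]
      rw [digamma_add_one ha, trigamma_add_one ha]
      have hane : a ≠ 0 := NI.ne_zero ha
      field_simp
      ring
  | succ N ih =>
      have hAN : a + (N : ℝ) ∈ NI := NI.add_natc ha N
      have hmN : a - (N : ℝ) ∈ NI := NI.sub_natc ha N
      -- difference equations
      have e1 : digamma (a + ((N : ℕ) + 1 : ℕ)) = digamma (a + N) + 1 / (a + N) := by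
        have h := digamma_add_one hAN
        rw [show a + ((N : ℕ) + 1 : ℕ) = (a + N) + 1 by push_cast; ring, h]
      have e2 : trigamma (a + ((N : ℕ) + 1 : ℕ)) = trigamma (a + N) - 1 / (a + N) ^ 2 := by
        have h := trigamma_add_one hAN
        rw [show a + ((N : ℕ) + 1 : ℕ) = (a + N) + 1 by push_cast; ring, h]
      have e3 : digamma (a - ((N : ℕ) + 1 : ℕ) + 1) = digamma (a - N + 1) - 1 / (a - N) := by
        have h := digamma_add_one hmN
        rw [show a - ((N : ℕ) + 1 : ℕ) + 1 = a - N by push_cast; ring, h]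
        ring
      have e4 : trigamma (a - ((N : ℕ) + 1 : ℕ) + 1) = trigamma (a - N + 1) + 1 / (a - N) ^ 2 := by
        have h := trigamma_add_one hmN
        rw [show a - ((N : ℕ) + 1 : ℕ) + 1 = a - N by push_cast; ring, h]
        ring
      have e4' : trigamma (a - (N : ℝ)) = trigamma (a - N + 1) + 1 / (a - N) ^ 2 := by
        have h := trigamma_add_one hmN
        rw [h]; ring
      -- sum splitting
      have e5 : ∑ l ∈ Finset.range (N + 1), ∑ m ∈ Finset.range (N + 1), 1 / (a + l - m) ^ 2
          = (∑ l ∈ Finset.range N, ∑ m ∈ Finset.range N, 1 / (a + l - m) ^ 2)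
            + trigamma (a - (N : ℝ)) - trigamma (a + ((N : ℕ) + 1 : ℕ)) := by
        rw [Finset.sum_range_succ]
        have h1 : ∀ l ∈ Finset.range N, ∑ m ∈ Finset.range (N + 1), (1:ℝ) / (a + l - m) ^ 2
            = (∑ m ∈ Finset.range N, 1 / (a + l - m) ^ 2) + 1 / (a + l - N) ^ 2 :=
          fun l _ => Finset.sum_range_succ _ _
        rw [Finset.sum_congr rfl h1, Finset.sum_add_distrib]
        have s2 : ∑ l ∈ Finset.range N, (1:ℝ) / (a + l - N) ^ 2
            = trigamma (a - N) - trigamma a := by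
          have ht := trigamma_telescope (a - N) hmN N
          rw [show a - (N : ℝ) + (N : ℝ) = a by ring] at ht
          rw [ht]
          refine Finset.sum_congr rfl fun l _ => ?_
          congr 1; ring
        have s1 : ∑ m ∈ Finset.range (N + 1), (1:ℝ) / (a + N - m) ^ 2
            = trigamma a - trigamma (a + ((N : ℕ) + 1 : ℕ)) := by
          have ht := trigamma_telescope a ha (N + 1)
          rw [show ((N + 1 : ℕ) : ℝ) = (((N : ℕ) + 1 : ℕ) : ℝ) by norm_num] at ht
          rw [ht]
          have hr := Finset.sum_range_reflect (fun j => (1:ℝ) / (a + j) ^ 2) (N + 1)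
          rw [← hr]
          refine Finset.sum_congr rfl fun m hm => ?_
          have hmle : m ≤ N := Nat.lt_succ_iff.mp (Finset.mem_range.mp hm)
          simp only [Nat.add_sub_cancel]
          rw [Nat.cast_sub hmle]
          congr 1; ring
        rw [s2, s1]
        ring
      rw [e5]
      push_cast only [Nat.cast_succ] at e1 e2 e3 e4 ⊢
      rw [e1, e2, e3, e4, e4']
      have h1 : a + (N : ℝ) ≠ 0 := NI.ne_zero hAN
      have h2 : a - (N : ℝ) ≠ 0 := NI.ne_zero hmN
      have q1 : (a + (N : ℝ)) * (1 / (a + N) ^ 2) = 1 / (a + N) := by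
        field_simp
      have q2 : (a - (N : ℝ)) * (1 / (a - N) ^ 2) = 1 / (a - N) := by
        field_simp
      linear_combination ih - q1 + q2

/-- Proposition 1: closed form of the second-order SFF of the CUE at non-integer real `k`. -/
theorem sff_closed_form (N : ℕ) (hN : 0 < N) (k : ℝ) (hk : ∀ n : ℤ, k ≠ (n : ℝ)) :
    (N : ℝ) - 1 / (2 * π ^ 2) * (1 - Real.cos (2 * π * k)) *
        ∑ l ∈ Finset.range N, ∑ m ∈ Finset.range N, 1 / (k + l - m) ^ 2 =
      min (N : ℝ) (|k| - Real.sin (2 * π * |k|) / (2 * π)) +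
        Real.sin (π * |k|) ^ 2 / π ^ 2 *
          (digamma ((N : ℝ) + |k|) + ((N : ℝ) + |k|) * trigamma ((N : ℝ) + |k|) +
            digamma ((abs ((N : ℝ) - |k|)) + 1) + (abs ((N : ℝ) - |k|)) * trigamma ((abs ((N : ℝ) - |k|)) + 1) -
            2 * |k| * trigamma (|k| + 1) - 2 * digamma (|k| + 1)) := by
  have hkNI : k ∈ NI := hk
  obtain ⟨a, haeq⟩ : ∃ a : ℝ, a = |k| := ⟨|k|, rfl⟩
  have ha : a ∈ NI := by
    rcases abs_cases k with ⟨h, _⟩ | ⟨h, _⟩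
    · rw [haeq, h]; exact hkNI
    · rw [haeq, h]; exact NI.neg hkNI
  have hpi : (0 : ℝ) < π := Real.pi_pos
  have h2pi : (0 : ℝ) < 2 * π := by positivity
  have hs0 : Real.sin (π * a) ≠ 0 := NI.sin_ne_zero ha
  have hcoef : 1 / (2 * π ^ 2) * (1 - Real.cos (2 * π * k)) = Real.sin (π * a) ^ 2 / π ^ 2 := by
    have h1 : Real.cos (2 * (π * k)) = 1 - 2 * Real.sin (π * k) ^ 2 := by
      have hc := Real.cos_two_mul (π * k)
      have hp := Real.sin_sq_add_cos_sq (π * k)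
      linarith
    have h2 : Real.sin (π * a) ^ 2 = Real.sin (π * k) ^ 2 := by
      rcases abs_cases k with ⟨h, _⟩ | ⟨h, _⟩
      · rw [haeq, h]
      · rw [haeq, h, mul_neg, Real.sin_neg]; ring
    rw [show 2 * π * k = 2 * (π * k) by ring, h1, ← h2]
    field_simp
    ring
  have hD : ∑ l ∈ Finset.range N, ∑ m ∈ Finset.range N, 1 / (k + l - m) ^ 2
      = ∑ l ∈ Finset.range N, ∑ m ∈ Finset.range N, 1 / (a + l - m) ^ 2 := by
    rcases abs_cases k with ⟨h, _⟩ | ⟨h, _⟩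
    · rw [haeq, h]
    · rw [Finset.sum_comm]
      refine Finset.sum_congr rfl fun i _ => Finset.sum_congr rfl fun j _ => ?_
      congr 1
      rw [show k + (j : ℝ) - i = -(a + i - j) by rw [haeq, h]; ring, neg_sq]
  rw [← haeq, hcoef, hD, show (N : ℝ) + a = a + (N : ℝ) from add_comm _ _]
  have hne : a ≠ (N : ℝ) := by
    intro h; exact (ha (N : ℤ)) (by push_cast; exact h)
  have hm := master a ha N
  rcases lt_or_gt_of_ne hne with hlt | hgt
  · -- a < N
    have habs : |(N : ℝ) - a| = (N : ℝ) - a := abs_of_pos (by linarith)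
    rw [habs]
    have hper : Real.sin (2 * π * ((N : ℝ) - a)) = -Real.sin (2 * π * a) := by
      calc Real.sin (2 * π * ((N : ℝ) - a))
          = Real.sin (-(2 * π * a) + (N : ℤ) * (2 * π)) := by congr 1; push_cast; ring
        _ = Real.sin (-(2 * π * a)) := Real.sin_add_int_mul_two_pi _ _
        _ = -Real.sin (2 * π * a) := Real.sin_neg _
    have hle : Real.sin (2 * π * ((N : ℝ) - a)) ≤ 2 * π * ((N : ℝ) - a) :=
      Real.sin_le (by nlinarith)
    rw [hper] at hle
    have hd : Real.sin (2 * π * a) / (2 * π) * (2 * π) = Real.sin (2 * π * a) :=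
      div_mul_cancel₀ _ (ne_of_gt h2pi)
    have hmin : min (N : ℝ) (a - Real.sin (2 * π * a) / (2 * π))
        = a - Real.sin (2 * π * a) / (2 * π) := by
      apply min_eq_right
      nlinarith [hle, h2pi, hd]
    rw [hmin]
    have hmN : a - (N : ℝ) ∈ NI := NI.sub_natc ha N
    have hden : a - (N : ℝ) ≠ 0 := NI.ne_zero hmN
    have hcN : Real.cos (π * (a - N)) = (-1) ^ N * Real.cos (π * a) := by
      rw [show π * (a - (N : ℝ)) = -((N : ℝ) * π - π * a) by ring, Real.cos_neg,
        Real.cos_nat_mul_pi_sub]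
    have hsN : Real.sin (π * (a - N)) = (-1) ^ N * Real.sin (π * a) := by
      rw [show π * (a - (N : ℝ)) = -((N : ℝ) * π - π * a) by ring, Real.sin_neg,
        Real.sin_nat_mul_pi_sub]
      ring
    have hm1 : ((-1 : ℝ)) ^ N ≠ 0 := pow_ne_zero _ (by norm_num)
    have ref0 : digamma (a - N) - digamma ((N : ℝ) - a + 1)
        = -(π * (Real.cos (π * a) / Real.sin (π * a))) := by
      have h := digamma_reflect hmN
      rw [show 1 - (a - (N : ℝ)) = (N : ℝ) - a + 1 by ring] at h
      rw [h, hcN, hsN, mul_div_mul_left _ _ hm1]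
    have ref1 : trigamma (a - N) + trigamma ((N : ℝ) - a + 1)
        = π ^ 2 / Real.sin (π * a) ^ 2 := by
      have h := trigamma_reflect hmN
      rw [show 1 - (a - (N : ℝ)) = (N : ℝ) - a + 1 by ring] at h
      rw [h, hsN, mul_pow, show ((-1 : ℝ) ^ N) ^ 2 = 1 by
        rw [← pow_mul, mul_comm, pow_mul]; norm_num, one_mul]
    have d0 : digamma (a - N + 1) = digamma (a - N) + 1 / (a - N) := digamma_add_one hmN
    have d1 : trigamma (a - N + 1) = trigamma (a - N) - 1 / (a - N) ^ 2 := trigamma_add_one hmN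
    have q1 : ((N : ℝ) - a) * (1 / (a - N) ^ 2) + 1 / (a - N) = 0 := by
      field_simp
      ring
    have q2 : Real.sin (2 * π * a) / (2 * π) = Real.sin (π * a) * Real.cos (π * a) / π := by
      rw [show 2 * π * a = 2 * (π * a) by ring, Real.sin_two_mul]
      field_simp
    have q3 : Real.sin (π * a) ^ 2 / π ^ 2 * (π * (Real.cos (π * a) / Real.sin (π * a)))
        = Real.sin (π * a) * Real.cos (π * a) / π := by
      field_simp
    have q4 : Real.sin (π * a) ^ 2 / π ^ 2 * (π ^ 2 / Real.sin (π * a) ^ 2) = 1 := by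
      field_simp
    rw [q2]
    linear_combination (-(Real.sin (π * a) ^ 2 / π ^ 2)) * hm
      + (Real.sin (π * a) ^ 2 / π ^ 2) * d0
      + (Real.sin (π * a) ^ 2 / π ^ 2) * ref0
      + (Real.sin (π * a) ^ 2 / π ^ 2) * (a - (N : ℝ)) * d1
      - (Real.sin (π * a) ^ 2 / π ^ 2) * ((N : ℝ) - a) * ref1
      - q3 - ((N : ℝ) - a) * q4 + (Real.sin (π * a) ^ 2 / π ^ 2) * q1
  · -- N < a
    have habs : |(N : ℝ) - a| = a - (N : ℝ) := by
      rw [abs_sub_comm]; exact abs_of_pos (by linarith)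
    rw [habs]
    have hper : Real.sin (2 * π * a) = Real.sin (2 * π * (a - N)) := by
      calc Real.sin (2 * π * a)
          = Real.sin (2 * π * (a - N) + (N : ℤ) * (2 * π)) := by congr 1; push_cast; ring
        _ = Real.sin (2 * π * (a - N)) := Real.sin_add_int_mul_two_pi _ _
    have hle : Real.sin (2 * π * (a - (N : ℝ))) ≤ 2 * π * (a - (N : ℝ)) :=
      Real.sin_le (by nlinarith)
    rw [← hper] at hle
    have hd : Real.sin (2 * π * a) / (2 * π) * (2 * π) = Real.sin (2 * π * a) :=
      div_mul_cancel₀ _ (ne_of_gt h2pi)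
    have hmin : min (N : ℝ) (a - Real.sin (2 * π * a) / (2 * π)) = (N : ℝ) := by
      apply min_eq_left
      nlinarith [hle, h2pi, hd]
    rw [hmin]
    linear_combination (-(Real.sin (π * a) ^ 2 / π ^ 2)) * hm
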